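/- arXiv:1709.03834 — 3 statements merged into one kernel-verified Lean document; each statement's English description precedes it below -/
import Mathlib

section
/- Let Δ be a simplicial complex with a torsion-free surjective finite abelian group structure 𝒢 (i.e., |𝒢(∅)| = 1). Then the independence poset Ind(E, Δ, 𝒢) is a simplicial poset with unique minimal element (∅, 0): every interval from the minimal element to any element (S, g) is isomorphic to the Boolean algebra of subsets of S. -/
open Finset

/-- An assignment of finite abelian groups to the finite subsets of `E`. -/
structure GAssign (E : Type*) [DecidableEq E] where
  G : Finset E → Type
  grp : ∀ S, AddCommGroup (G S)
  fin : ∀ S, Fintype (G S)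

instance {E : Type*} [DecidableEq E] (A : GAssign E) (S : Finset E) :
    AddCommGroup (A.G S) := A.grp S

instance {E : Type*} [DecidableEq E] (A : GAssign E) (S : Finset E) :
    Fintype (A.G S) := A.fin S

/-- A surjective finite abelian group structure on the simplicial complex `Δ`:
finite abelian groups attached to faces, with surjective structure maps along covers
satisfying the commuting-squares condition. -/
structure SFAGS {E : Type*} [DecidableEq E] (Δ : Finset (Finset E)) extends GAssign E where
  π : ∀ (S : Finset E) (a : E), a ∉ S → (toGAssign.G (insert a S) →+ toGAssign.G S)
  surj : ∀ (S : Finset E) (a : E) (ha : a ∉ S), insert a S ∈ Δ →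
    Function.Surjective (π S a ha)
  comm : ∀ (S : Finset E) (a b : E) (ha : a ∉ S) (hb : b ∉ S)
    (hab : a ∉ insert b S) (hba : b ∉ insert a S),
    insert a (insert b S) ∈ Δ →
    ∀ g : toGAssign.G (insert a (insert b S)),
      π S b hb (π (insert b S) a hab g) =
      π S a ha (π (insert a S) b hba
        (cast (congrArg toGAssign.G (Finset.insert_comm a b S)) g))

namespace SFAGS

variable {E : Type*} [DecidableEq E] {Δ : Finset (Finset E)}

/-- Transport along an equality of finsets, as a group homomorphism. -/
def castHom (𝒢 : SFAGS Δ) {S T : Finset E} (h : S = T) : 𝒢.G S →+ 𝒢.G T := by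
  subst h; exact AddMonoidHom.id _

/-- The composite of the structure maps along a list enumerating a face. -/
def chainMap (𝒢 : SFAGS Δ) : (L : List E) → L.Nodup → (𝒢.G L.toFinset →+ 𝒢.G ∅)
  | [], _ => 𝒢.castHom (by simp)
  | a :: L, h =>
      ((𝒢.chainMap L (List.nodup_cons.mp h).2).comp
        (𝒢.π L.toFinset a (by simpa using (List.nodup_cons.mp h).1))).comp
        (𝒢.castHom (by simp))

/-- The composite map `π_S : 𝒢(S) → 𝒢(∅)`. -/
noncomputable def piS (𝒢 : SFAGS Δ) (S : Finset E) : 𝒢.G S →+ 𝒢.G ∅ :=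
  (𝒢.chainMap S.toList S.nodup_toList).comp (𝒢.castHom S.toList_toFinset.symm)

/-- The elements of the independence poset `Ind(E, Δ, 𝒢)`: pairs `(S, g)` with
`S ∈ Δ` and `g ∈ 𝒢(S)`. -/
def Elem (𝒢 : SFAGS Δ) := {p : Σ S : Finset E, 𝒢.G S // p.1 ∈ Δ}

/-- The cover relation of the independence poset: `(insert a S, g)` covers `(S, h)`
iff `π_{S,a}(g) = h`. -/
def CovBy (𝒢 : SFAGS Δ) (p q : 𝒢.Elem) : Prop :=
  ∃ (a : E) (ha : a ∉ p.1.1) (h : q.1.1 = insert a p.1.1),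
    𝒢.π p.1.1 a ha (𝒢.castHom h q.1.2) = p.1.2

/-- The order of the independence poset: reflexive-transitive closure of the covers. -/
def le (𝒢 : SFAGS Δ) : 𝒢.Elem → 𝒢.Elem → Prop := Relation.ReflTransGen 𝒢.CovBy

end SFAGS

namespace SFAGS

variable {E : Type*} [DecidableEq E] {Δ : Finset (Finset E)}

lemma castHom_cast (𝒢 : SFAGS Δ) {S T : Finset E} (h : S = T) (g : 𝒢.G S) :
    𝒢.castHom h g = cast (congrArg 𝒢.G h) g := by subst h; rfl

lemma castHom_castHom (𝒢 : SFAGS Δ) {S T U : Finset E} (h1 : S = T) (h2 : T = U)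
    (g : 𝒢.G S) : 𝒢.castHom h2 (𝒢.castHom h1 g) = 𝒢.castHom (h1.trans h2) g := by
  subst h1; subst h2; rfl

lemma elem_ext (𝒢 : SFAGS Δ) {p q : 𝒢.Elem} (h1 : p.1.1 = q.1.1)
    (h2 : 𝒢.castHom h1 p.1.2 = q.1.2) : p = q := by
  obtain ⟨⟨S, g⟩, hp⟩ := p
  obtain ⟨⟨T, h⟩, hq⟩ := q
  dsimp at h1 h2
  subst h1
  change g = h at h2
  subst h2
  rfl

/-- Projection one step down, from an ambient propositionally-equal set. -/
def pdown (𝒢 : SFAGS Δ) (W S : Finset E) (a : E) (ha : a ∉ S) (hW : W = insert a S) :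
    𝒢.G W →+ 𝒢.G S := (𝒢.π S a ha).comp (𝒢.castHom hW)

lemma pdown_congr (𝒢 : SFAGS Δ) {W S S' : Finset E} (hSS' : S = S') {a : E}
    (ha : a ∉ S) (ha' : a ∉ S') (hW : W = insert a S) (hW' : W = insert a S')
    (g : 𝒢.G W) :
    𝒢.castHom hSS' (𝒢.pdown W S a ha hW g) = 𝒢.pdown W S' a ha' hW' g := by
  subst hSS'; rfl

lemma pdown_pdown_comm (𝒢 : SFAGS Δ) {W X Y S : Finset E} {a b : E}
    (haX : a ∉ X) (hWX : W = insert a X) (hbS : b ∉ S) (hXS : X = insert b S)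
    (hbY : b ∉ Y) (hWY : W = insert b Y) (haS : a ∉ S) (hYS : Y = insert a S)
    (hΔ : W ∈ Δ) (g : 𝒢.G W) :
    𝒢.pdown X S b hbS hXS (𝒢.pdown W X a haX hWX g)
      = 𝒢.pdown Y S a haS hYS (𝒢.pdown W Y b hbY hWY g) := by
  subst hXS; subst hYS; subst hWX
  have := 𝒢.comm S a b haS hbS haX hbY hΔ g
  simp only [pdown, AddMonoidHom.comp_apply] at *
  rw [show 𝒢.castHom (rfl : insert a (insert b S) = insert a (insert b S)) g = g from rfl]
  rw [show ∀ (x : 𝒢.G (insert b S)), 𝒢.castHom (rfl : insert b S = insert b S) x = x from fun _ => rfl]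
  rw [show ∀ (x : 𝒢.G (insert a S)), 𝒢.castHom (rfl : insert a S = insert a S) x = x from fun _ => rfl]
  rw [castHom_cast] at *
  exact this

section
variable (𝒢 : SFAGS Δ) (hdc : ∀ ⦃S T : Finset E⦄, S ⊆ T → T ∈ Δ → S ∈ Δ)

/-- One step down in the independence poset. -/
def down (p : 𝒢.Elem) (a : E) (ha : a ∈ p.1.1) : 𝒢.Elem :=
  ⟨⟨p.1.1.erase a, 𝒢.pdown p.1.1 (p.1.1.erase a) a (Finset.notMem_erase a _)
      (Finset.insert_erase ha).symm p.1.2⟩,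
    hdc (Finset.erase_subset _ _) p.2⟩

lemma covby_down (p : 𝒢.Elem) (a : E) (ha : a ∈ p.1.1) :
    𝒢.CovBy (down 𝒢 hdc p a ha) p :=
  ⟨a, Finset.notMem_erase a _, (Finset.insert_erase ha).symm, rfl⟩

lemma covby_iff {p q : 𝒢.Elem} :
    𝒢.CovBy q p ↔ ∃ (a : E) (ha : a ∈ p.1.1), q = down 𝒢 hdc p a ha := by
  constructor
  · rintro ⟨a, ha, h, heq⟩
    have haP : a ∈ p.1.1 := by rw [h]; exact Finset.mem_insert_self a _
    refine ⟨a, haP, ?_⟩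
    have h1 : q.1.1 = p.1.1.erase a := by rw [h, Finset.erase_insert ha]
    refine 𝒢.elem_ext h1 ?_
    rw [← heq]
    exact (𝒢.pdown_congr h1 ha (Finset.notMem_erase a _) h
      (Finset.insert_erase haP).symm p.1.2)
  · rintro ⟨a, ha, rfl⟩; exact covby_down 𝒢 hdc p a ha

lemma diamond (p : 𝒢.Elem) {a b : E} (ha : a ∈ p.1.1) (hb : b ∈ p.1.1) (hne : a ≠ b)
    (hb' : b ∈ (down 𝒢 hdc p a ha).1.1) (ha' : a ∈ (down 𝒢 hdc p b hb).1.1) :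
    down 𝒢 hdc (down 𝒢 hdc p a ha) b hb' = down 𝒢 hdc (down 𝒢 hdc p b hb) a ha' := by
  have h1 : (p.1.1.erase a).erase b = (p.1.1.erase b).erase a := Finset.erase_right_comm
  refine 𝒢.elem_ext (show (down 𝒢 hdc (down 𝒢 hdc p a ha) b hb').1.1 = _ from h1) ?_
  have hbS0 : b ∉ (p.1.1.erase b).erase a := fun h =>
    Finset.notMem_erase b _ (Finset.mem_of_mem_erase h)
  have hXS : p.1.1.erase a = insert b ((p.1.1.erase b).erase a) := by
    rw [← h1]; exact (Finset.insert_erase hb').symm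
  exact (𝒢.pdown_congr h1 (Finset.notMem_erase b _) hbS0 (Finset.insert_erase hb').symm
      hXS _).trans <| 𝒢.pdown_pdown_comm (Finset.notMem_erase a _) (Finset.insert_erase ha).symm
    hbS0 hXS (Finset.notMem_erase b _) (Finset.insert_erase hb).symm
    (Finset.notMem_erase a _) (Finset.insert_erase ha').symm p.2 p.1.2

end

variable (𝒢 : SFAGS Δ) (hdc : ∀ ⦃S T : Finset E⦄, S ⊆ T → T ∈ Δ → S ∈ Δ)

include hdc

lemma subset_of_le {p q : 𝒢.Elem} (h : 𝒢.le q p) : q.1.1 ⊆ p.1.1 := by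
  induction h with
  | refl => exact subset_rfl
  | tail _ hcov ih =>
    obtain ⟨a, _, hins, _⟩ := hcov
    exact ih.trans (by rw [hins]; exact Finset.subset_insert _ _)

lemma le_self_eq {p q : 𝒢.Elem} (h : 𝒢.le q p) (hs : q.1.1 = p.1.1) : q = p := by
  rcases Relation.ReflTransGen.cases_tail h with h' | ⟨c, hqc, hcp⟩
  · exact h'.symm
  · exfalso
    obtain ⟨a, hac, hins, _⟩ := hcp
    have h2 : a ∈ q.1.1 := by rw [hs, hins]; exact Finset.mem_insert_self a _
    exact hac (subset_of_le 𝒢 hdc hqc h2)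

lemma exists_le : ∀ (n : ℕ) (p : 𝒢.Elem) (T : Finset E), (p.1.1 \ T).card = n →
    T ⊆ p.1.1 → ∃ q : 𝒢.Elem, 𝒢.le q p ∧ q.1.1 = T := by
  intro n
  induction n with
  | zero =>
    intro p T hn hT
    refine ⟨p, Relation.ReflTransGen.refl, ?_⟩
    have := Finset.sdiff_eq_empty_iff_subset.mp (Finset.card_eq_zero.mp hn)
    exact Finset.Subset.antisymm this hT
  | succ n ih =>
    intro p T hn hT
    have hne : (p.1.1 \ T).Nonempty := by
      rw [← Finset.card_pos, hn]; omega
    obtain ⟨a, hamem⟩ := hne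
    have ha : a ∈ p.1.1 := (Finset.mem_sdiff.mp hamem).1
    have haT : a ∉ T := (Finset.mem_sdiff.mp hamem).2
    have h1 : ((down 𝒢 hdc p a ha).1.1 \ T).card = n := by
      show ((p.1.1.erase a) \ T).card = n
      rw [Finset.erase_sdiff_comm, Finset.card_erase_of_mem hamem, hn]
      omega
    have hT' : T ⊆ (down 𝒢 hdc p a ha).1.1 := Finset.subset_erase.mpr ⟨hT, haT⟩
    obtain ⟨q, hle, hq⟩ := ih (down 𝒢 hdc p a ha) T h1 hT'
    exact ⟨q, hle.tail (covby_down 𝒢 hdc p a ha), hq⟩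

lemma unique_le : ∀ (n : ℕ) (p : 𝒢.Elem), p.1.1.card = n →
    ∀ q r : 𝒢.Elem, 𝒢.le q p → 𝒢.le r p → q.1.1 = r.1.1 → q = r := by
  intro n
  induction n using Nat.strong_induction_on with
  | _ n ih =>
  intro p hn q r hq hr hqr
  rcases Relation.ReflTransGen.cases_tail hq with h' | ⟨c, hqc, hcp⟩
  · subst h'
    exact (le_self_eq 𝒢 hdc hr hqr.symm).symm
  rcases Relation.ReflTransGen.cases_tail hr with h'' | ⟨d, hrd, hdp⟩
  · subst h''
    exact le_self_eq 𝒢 hdc hq hqr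
  obtain ⟨a, ha, hc⟩ := (covby_iff 𝒢 hdc).mp hcp
  obtain ⟨b, hb, hd⟩ := (covby_iff 𝒢 hdc).mp hdp
  subst hc; subst hd
  have hcard : ∀ (x : E) (hx : x ∈ p.1.1), (down 𝒢 hdc p x hx).1.1.card < n := by
    intro x hx; rw [← hn]; exact Finset.card_erase_lt_of_mem hx
  by_cases hab : a = b
  · subst hab
    exact ih _ (hcard a ha) (down 𝒢 hdc p a ha) rfl q r hqc hrd hqr
  · have hb1 : b ∈ (down 𝒢 hdc p a ha).1.1 := Finset.mem_erase.mpr ⟨Ne.symm hab, hb⟩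
    have ha1 : a ∈ (down 𝒢 hdc p b hb).1.1 := Finset.mem_erase.mpr ⟨hab, ha⟩
    have hdia := diamond 𝒢 hdc p ha hb hab hb1 ha1
    have hTm : q.1.1 ⊆ (down 𝒢 hdc (down 𝒢 hdc p a ha) b hb1).1.1 := by
      have h2 : q.1.1 ⊆ (down 𝒢 hdc p a ha).1.1 := subset_of_le 𝒢 hdc hqc
      have h3 : r.1.1 ⊆ (down 𝒢 hdc p b hb).1.1 := subset_of_le 𝒢 hdc hrd
      refine Finset.subset_erase.mpr ⟨h2, fun hbq => ?_⟩
      exact Finset.notMem_erase b _ (h3 (hqr ▸ hbq))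
    obtain ⟨s, hsm, hsT⟩ :=
      exists_le 𝒢 hdc _ (down 𝒢 hdc (down 𝒢 hdc p a ha) b hb1) q.1.1 rfl hTm
    have hsc : 𝒢.le s (down 𝒢 hdc p a ha) := hsm.tail (covby_down 𝒢 hdc _ b hb1)
    have hsd : 𝒢.le s (down 𝒢 hdc p b hb) := (hdia ▸ hsm).tail (covby_down 𝒢 hdc _ a ha1)
    have h4 := ih _ (hcard a ha) (down 𝒢 hdc p a ha) rfl q s hqc hsc hsT.symm
    have h5 := ih _ (hcard b hb) (down 𝒢 hdc p b hb) rfl r s hrd hsd (hsT.trans hqr).symm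
    rw [h4, h5]

lemma le_of_le_subset {p q₁ q₂ : 𝒢.Elem} (h1 : 𝒢.le q₁ p) (h2 : 𝒢.le q₂ p)
    (hs : q₁.1.1 ⊆ q₂.1.1) : 𝒢.le q₁ q₂ := by
  obtain ⟨r, hr, hrT⟩ := exists_le 𝒢 hdc _ q₂ q₁.1.1 rfl hs
  have heq : r = q₁ := unique_le 𝒢 hdc _ p rfl r q₁ (hr.trans h2) h1 hrT
  exact heq ▸ hr

end SFAGS

/-- If `𝒢` is torsion-free (`|𝒢(∅)| = 1`), then the independence poset
`Ind(E, Δ, 𝒢)` is a simplicial poset with unique minimal element `(∅, 0)`: every element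
lies above `(∅, 0)`, and the interval from `(∅, 0)` to any element `(S, g)` is isomorphic
to the Boolean algebra of subsets of `S`. -/
theorem ind_poset_simplicial {E : Type*} [DecidableEq E] {Δ : Finset (Finset E)}
    (𝒢 : SFAGS Δ) (hdc : ∀ ⦃S T : Finset E⦄, S ⊆ T → T ∈ Δ → S ∈ Δ)
    (hempty : ∅ ∈ Δ) (htf : Nat.card (𝒢.G ∅) = 1) :
    (∀ p : 𝒢.Elem, 𝒢.le ⟨⟨∅, 0⟩, hempty⟩ p) ∧
    (∀ p : 𝒢.Elem, ∃ e : {q : 𝒢.Elem // 𝒢.le q p} ≃ {T : Finset E // T ⊆ p.1.1},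
      ∀ q₁ q₂ : {q : 𝒢.Elem // 𝒢.le q p}, 𝒢.le q₁.1 q₂.1 ↔ (e q₁).1 ⊆ (e q₂).1) := by
  haveI hsub : Subsingleton (𝒢.G ∅) := (Nat.card_eq_one_iff_unique.mp htf).1
  have hbot : ∀ q : 𝒢.Elem, q.1.1 = ∅ → q = ⟨⟨∅, 0⟩, hempty⟩ := fun q hq =>
    𝒢.elem_ext hq (Subsingleton.elim _ _)
  have part1 : ∀ p : 𝒢.Elem, 𝒢.le ⟨⟨∅, 0⟩, hempty⟩ p := by
    intro p
    obtain ⟨q, hle, hq⟩ := SFAGS.exists_le 𝒢 hdc _ p ∅ rfl (Finset.empty_subset _)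
    have := hbot q hq
    subst this
    exact hle
  refine ⟨part1, fun p => ?_⟩
  have hbij : Function.Bijective (fun q : {q : 𝒢.Elem // 𝒢.le q p} =>
      (⟨q.1.1.1, SFAGS.subset_of_le 𝒢 hdc q.2⟩ : {T : Finset E // T ⊆ p.1.1})) := by
    constructor
    · intro q₁ q₂ h
      exact Subtype.ext (SFAGS.unique_le 𝒢 hdc _ p rfl q₁.1 q₂.1 q₁.2 q₂.2
        (congrArg Subtype.val h))
    · rintro ⟨T, hT⟩
      obtain ⟨q, hle, hq⟩ := SFAGS.exists_le 𝒢 hdc _ p T rfl hT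
      exact ⟨⟨q, hle⟩, Subtype.ext hq⟩
  exact ⟨Equiv.ofBijective _ hbij, fun q₁ q₂ => ⟨fun h => SFAGS.subset_of_le 𝒢 hdc h,
    fun h => SFAGS.le_of_le_subset 𝒢 hdc q₁.2 q₂.2 h⟩⟩
end

section
/- Let Δ be a simplicial complex with a surjective finite abelian group structure 𝒢, and fix a face S ∈ Δ. For any two elements g_1, g_2 ∈ 𝒢(∅), the number of elements h ∈ 𝒢(S) with π_S(h) = g_1 equals the number with π_S(h) = g_2 (namely both equal |𝒢(S)|/|𝒢(∅)|). Consequently, the f-vectors of the connected components of Ind(E, Δ, 𝒢) are pairwise equal. -/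
open Finset

section Aux

variable {E : Type*} [DecidableEq E] {Δ : Finset (Finset E)}

lemma castHom_surj (𝒢 : SFAGS Δ) {S T : Finset E} (h : S = T) :
    Function.Surjective (𝒢.castHom h) := by
  subst h; exact fun x => ⟨x, rfl⟩

lemma chainMap_surj (𝒢 : SFAGS Δ)
    (hdc : ∀ ⦃S T : Finset E⦄, S ⊆ T → T ∈ Δ → S ∈ Δ) :
    ∀ (L : List E) (h : L.Nodup), L.toFinset ∈ Δ →
      Function.Surjective (𝒢.chainMap L h)
  | [], h, _ => castHom_surj 𝒢 _
  | a :: L, h, hmem => by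
    have hins : insert a L.toFinset ∈ Δ := by simpa using hmem
    have hL : L.toFinset ∈ Δ := hdc (Finset.subset_insert _ _) hins
    have h1 := chainMap_surj 𝒢 hdc L (List.nodup_cons.mp h).2 hL
    have h2 := 𝒢.surj L.toFinset a (by simpa using (List.nodup_cons.mp h).1) hins
    exact (h1.comp h2).comp (castHom_surj 𝒢 _)

lemma piS_surj (𝒢 : SFAGS Δ)
    (hdc : ∀ ⦃S T : Finset E⦄, S ⊆ T → T ∈ Δ → S ∈ Δ)
    (S : Finset E) (hS : S ∈ Δ) : Function.Surjective (𝒢.piS S) := by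
  have : S.toList.toFinset ∈ Δ := by rwa [Finset.toList_toFinset]
  exact (chainMap_surj 𝒢 hdc S.toList S.nodup_toList this).comp (castHom_surj 𝒢 _)

/-- Translation equivalence between two fibers of a group hom. -/
def fiberEquiv {A B : Type*} [AddCommGroup A] [AddCommGroup B] (f : A →+ B)
    (g₁ g₂ : B) (a : A) (ha : f a = g₂ - g₁) :
    {h : A // f h = g₁} ≃ {h : A // f h = g₂} where
  toFun h := ⟨h.1 + a, by rw [map_add, h.2, ha]; abel⟩
  invFun h := ⟨h.1 - a, by rw [map_sub, h.2, ha]; abel⟩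
  left_inv h := by ext; simp
  right_inv h := by ext; simp

lemma fiber_card_eq {A B : Type*} [AddCommGroup A] [AddCommGroup B]
    [Fintype A] [Fintype B] (f : A →+ B) (hf : Function.Surjective f) (g : B) :
    Nat.card {h : A // f h = g} = Fintype.card A / Fintype.card B := by
  obtain ⟨a, ha⟩ := hf g
  have e1 : {h : A // f h = 0} ≃ {h : A // f h = g} :=
    fiberEquiv f 0 g a (by rw [ha]; abel)
  have e2 : {h : A // f h = 0} ≃ f.ker :=
    Equiv.subtypeEquivRight fun x => (AddMonoidHom.mem_ker (f := f) (x := x)).symm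
  have hq : Nat.card (A ⧸ f.ker) = Fintype.card B := by
    rw [Nat.card_congr (QuotientAddGroup.quotientKerEquivOfSurjective f hf).toEquiv,
      Nat.card_eq_fintype_card]
  have hcard : Nat.card A = Fintype.card B * Nat.card f.ker := by
    rw [← hq]; exact AddSubgroup.card_eq_card_quotient_mul_card_addSubgroup f.ker
  rw [← Nat.card_congr e1, Nat.card_congr e2]
  rw [Nat.card_eq_fintype_card] at hcard
  rw [hcard, Nat.mul_div_cancel_left _ Fintype.card_pos]

end Aux

/-- For a face `S ∈ Δ`, the fibers of `π_S : 𝒢(S) → 𝒢(∅)` all have the same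
cardinality, namely `|𝒢(S)|/|𝒢(∅)|`; consequently the f-vectors of the connected
components of `Ind(E, Δ, 𝒢)` (elements of rank `i` above the minimal element `(∅, g)`)
are pairwise equal. -/


theorem ind_poset_fibers_equal {E : Type*} [DecidableEq E] [Fintype E]
    {Δ : Finset (Finset E)} (𝒢 : SFAGS Δ)
    (hdc : ∀ ⦃S T : Finset E⦄, S ⊆ T → T ∈ Δ → S ∈ Δ)
    (S : Finset E) (hS : S ∈ Δ) (g₁ g₂ : 𝒢.G ∅) :
    (Nat.card {h : 𝒢.G S // 𝒢.piS S h = g₁} =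
        Nat.card {h : 𝒢.G S // 𝒢.piS S h = g₂} ∧
      Nat.card {h : 𝒢.G S // 𝒢.piS S h = g₁} =
        Fintype.card (𝒢.G S) / Fintype.card (𝒢.G ∅)) ∧
    ∀ i : ℕ,
      Nat.card {p : 𝒢.Elem // p.1.1.card = i ∧ 𝒢.piS p.1.1 p.1.2 = g₁} =
      Nat.card {p : 𝒢.Elem // p.1.1.card = i ∧ 𝒢.piS p.1.1 p.1.2 = g₂} := by
  have hsurj : ∀ T : Finset E, T ∈ Δ → Function.Surjective (𝒢.piS T) :=
    fun T hT => piS_surj 𝒢 hdc T hT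
  obtain ⟨aS, haS⟩ := hsurj S hS (g₂ - g₁)
  constructor
  · constructor
    · exact Nat.card_congr (fiberEquiv (𝒢.piS S) g₁ g₂ aS haS)
    · exact fiber_card_eq (𝒢.piS S) (hsurj S hS) g₁
  · intro i
    choose a ha using fun T (hT : T ∈ Δ) => hsurj T hT (g₂ - g₁)
    refine Nat.card_congr
      ⟨fun p => ⟨⟨⟨p.1.1.1, p.1.1.2 + a _ p.1.2⟩, p.1.2⟩, p.2.1,
          by rw [map_add, p.2.2, ha]; abel⟩,
        fun p => ⟨⟨⟨p.1.1.1, p.1.1.2 - a _ p.1.2⟩, p.1.2⟩, p.2.1,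
          by rw [map_sub, p.2.2, ha]; abel⟩, ?_, ?_⟩
    · rintro ⟨⟨⟨T, h⟩, hT⟩, hc, hg⟩
      simp
    · rintro ⟨⟨⟨T, h⟩, hT⟩, hc, hg⟩
      simp
end

section
/- Consider the arithmetic matroid on ground set {1,2} with Δ = 2^{{1,2}} (the uniform matroid U_{2,2}) and multiplicity m(∅)=1, m({1})=m({2})=m({1,2})=2. Its arithmetic Tutte polynomial is 𝔐(x,y) = x² + 2x − 1, and hence its h-vector (1, 2, −1) has a negative entry. -/
open Finset Polynomial

/-- For the arithmetic matroid on `{1,2}` with `Δ = 2^{{1,2}}` (the uniform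
matroid `U_{2,2}`, whose rank function is the cardinality) and multiplicities `m(∅) = 1`,
`m({1}) = m({2}) = m({1,2}) = 2`, the arithmetic Tutte polynomial is
`𝔐(x,y) = x² + 2x - 1`; hence the h-vector `(1, 2, -1)` (the coefficient sequence of
`𝔐(t,1)`) has a negative entry: the coefficient of `t⁰` is negative. -/
theorem u22_aritutte_negative_h :
    (∀ (R : Type) (_ : CommRing R) (x y : R),
      (∑ A ∈ (Finset.univ : Finset (Fin 2)).powerset,
          (if A = ∅ then 1 else 2 : R) * (x - 1) ^ (2 - A.card) *
            (y - 1) ^ (A.card - A.card)) = x ^ 2 + 2 * x - 1) ∧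
    (∑ A ∈ (Finset.univ : Finset (Fin 2)).powerset,
        (if A = ∅ then 1 else 2 : Polynomial ℤ) * (Polynomial.X - 1) ^ (2 - A.card) *
          ((1 : Polynomial ℤ) - 1) ^ (A.card - A.card)).coeff 0 < 0 := by
  have key : ∀ (R : Type) (_ : CommRing R) (x y : R),
      (∑ A ∈ (Finset.univ : Finset (Fin 2)).powerset,
          (if A = ∅ then 1 else 2 : R) * (x - 1) ^ (2 - A.card) *
            (y - 1) ^ (A.card - A.card)) = x ^ 2 + 2 * x - 1 := by
    intro R _ x y
    have h : (Finset.univ : Finset (Fin 2)).powerset =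
        {∅, {0}, {1}, {0, 1}} := by decide
    rw [h, Finset.sum_insert (by decide), Finset.sum_insert (by decide),
      Finset.sum_insert (by decide), Finset.sum_singleton]
    have c1 : ({0} : Finset (Fin 2)).card = 1 := by decide
    have c2 : ({1} : Finset (Fin 2)).card = 1 := by decide
    have c3 : ({0, 1} : Finset (Fin 2)).card = 2 := by decide
    rw [c1, c2, c3]
    norm_num
    ring
  refine ⟨key, ?_⟩
  rw [key (Polynomial ℤ) _ Polynomial.X 1]
  simp
end
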